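/- Let μ be a Borel probability measure on ℝ satisfying the basic assumptions and with finite first moment, let k ≥ 1, let v ∈ (0,1)ᵏ be nondecreasing, and set q_j := F_μ^{[-1]}(v_j). Then W₁(μ, ν_{Q_v}) = ∫_ℝ min_{1≤j≤k} |x − q_j| dμ(x); consequently ν_{Q_v} minimizes λ ↦ W₁(μ, λ) over all probability measures λ on ℝ with support contained in {q_1,…,q_k}. -/

import Mathlib

open MeasureTheory Filter Topology ENNReal

/-- The 1-Wasserstein distance between two measures on ℝ, defined as the infimum of
transport costs over couplings. -/
noncomputable def W1 (α β : Measure ℝ) : ℝ :=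
  sInf {c : ℝ | ∃ π : Measure (ℝ × ℝ), IsProbabilityMeasure π ∧
    π.map Prod.fst = α ∧ π.map Prod.snd = β ∧ c = ∫ p, |p.1 - p.2| ∂π}

/-- The ∞-Wasserstein distance between two measures on ℝ. -/
noncomputable def Winf (α β : Measure ℝ) : ℝ :=
  sInf {c : ℝ | ∃ π : Measure (ℝ × ℝ), IsProbabilityMeasure π ∧
    π.map Prod.fst = α ∧ π.map Prod.snd = β ∧
    c = essSup (fun p : ℝ × ℝ => |p.1 - p.2|) π}

/-- `Pk k` : probability measures on ℝ supported on at most `k` points. -/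
def Pk (k : ℕ) : Set (Measure ℝ) :=
  {ν | IsProbabilityMeasure ν ∧ ∃ s : Finset ℝ, s.card ≤ k ∧ ν ((↑s : Set ℝ)ᶜ) = 0}

/-- Wasserstein projection distance of `μ` onto `k`-point measures. -/
noncomputable def projDist (k : ℕ) (μ : Measure ℝ) : ℝ :=
  sInf {c : ℝ | ∃ ν ∈ Pk k, c = W1 μ ν}

/-- Empirical measure of a tuple of points. -/
noncomputable def empMeas {n : ℕ} (x : Fin n → ℝ) : Measure ℝ :=
  ((n : ℝ≥0∞))⁻¹ • ∑ i : Fin n, Measure.dirac (x i)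

/-- Social cost of facility placement `y` for agents at `x`. -/
noncomputable def SC {n k : ℕ} (x : Fin n → ℝ) (y : Fin k → ℝ) : ℝ :=
  (n : ℝ)⁻¹ * ∑ i : Fin n, ⨅ j : Fin k, |x i - y j|

/-- Optimal social cost for `k` facilities. -/
noncomputable def SCopt (k : ℕ) {n : ℕ} (x : Fin n → ℝ) : ℝ :=
  ⨅ y : Fin k → ℝ, SC x y

/-- Topological support of a measure on ℝ. -/
def msupport (ν : Measure ℝ) : Set ℝ := {t : ℝ | ∀ U ∈ nhds t, ν U ≠ 0}

/-- Cumulative distribution function of a measure on ℝ. -/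
noncomputable def mcdf (μ : Measure ℝ) (t : ℝ) : ℝ := (μ (Set.Iic t)).toReal

/-- Quantile (generalized inverse c.d.f.) of a measure on ℝ. -/
noncomputable def mquantile (μ : Measure ℝ) (v : ℝ) : ℝ := sInf {t : ℝ | v ≤ mcdf μ t}

/-- Basic assumptions: `μ` is an absolutely continuous probability measure with density `ρ`,
supported on a (closed) interval `S`, with `ρ` positive on the interior of `S`, vanishing
outside `S`, and differentiable on `S`. -/
def BasicAssumptions (μ : Measure ℝ) : Prop :=
  IsProbabilityMeasure μ ∧
  ∃ (ρ : ℝ → ℝ) (S : Set ℝ),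
    μ = volume.withDensity (fun x => ENNReal.ofReal (ρ x)) ∧
    IsClosed S ∧ S.OrdConnected ∧ μ Sᶜ = 0 ∧
    (∀ x ∈ interior S, 0 < ρ x) ∧ (∀ x ∉ S, ρ x = 0) ∧
    DifferentiableOn ℝ ρ S

/-- The percentile mechanism: facility `j` is placed at the `(⌊(n-1)vⱼ⌋+1)`-th smallest
coordinate of `x`. -/
noncomputable def percentileMech {k : ℕ} (v : Fin k → ℝ) {n : ℕ} (x : Fin n → ℝ) :
    Fin k → ℝ :=
  fun j =>
    if h : 0 < n then
      x (Tuple.sort x ⟨min ⌊((n : ℝ) - 1) * v j⌋₊ (n - 1),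
        Nat.lt_of_le_of_lt (min_le_right _ _) (by omega)⟩)
    else 0

/-- Social cost of the percentile mechanism with percentile vector `v`. -/
noncomputable def SCv {k : ℕ} (v : Fin k → ℝ) {n : ℕ} (x : Fin n → ℝ) : ℝ :=
  SC x (percentileMech v x)

/-- Cumulative masses of the Voronoi cells of the points `y 0 < y 1 < ⋯ < y (k-1)`:
`cellBd μ y j = F_μ(z_j)` where `z_j = (y (j-1) + y j)/2` for `1 ≤ j ≤ k-1` (1-based),
with the conventions `F_μ(z_0) = 0` and `F_μ(z_k) = 1`. -/
noncomputable def cellBd (μ : Measure ℝ) {k : ℕ} (y : Fin k → ℝ) (j : ℕ) : ℝ :=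
  if h0 : j = 0 then 0
  else if hk : k ≤ j then 1
  else mcdf μ ((y ⟨j - 1, by omega⟩ + y ⟨j, by omega⟩) / 2)

/-- The measure `ν_{Q_v}`: atoms at the quantiles `F_μ^{[-1]}(vⱼ)` weighted by the masses of
their Voronoi cells. -/
noncomputable def nuQ (μ : Measure ℝ) {k : ℕ} (v : Fin k → ℝ) : Measure ℝ :=
  ∑ i : Fin k,
    ENNReal.ofReal (cellBd μ (fun j => mquantile μ (v j)) ((i : ℕ) + 1) -
        cellBd μ (fun j => mquantile μ (v j)) (i : ℕ)) •
      Measure.dirac (mquantile μ (v i))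


/-! ### Auxiliary development for `stmt5` -/

namespace S5
variable {k : ℕ}

noncomputable def qe (hk : 1 ≤ k) (q : Fin k → ℝ) (j : ℕ) : ℝ := q ⟨min j (k-1), by omega⟩
noncomputable def mb (hk : 1 ≤ k) (q : Fin k → ℝ) (j : ℕ) : ℝ := (qe hk q j + qe hk q (j+1))/2
noncomputable def idx (hk : 1 ≤ k) (q : Fin k → ℝ) (x : ℝ) : ℕ :=
  ((Finset.range (k-1)).filter (fun j => mb hk q j < x)).card
noncomputable def T (hk : 1 ≤ k) (q : Fin k → ℝ) (x : ℝ) : ℝ := qe hk q (idx hk q x)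

variable {q : Fin k → ℝ} {hk : 1 ≤ k}

lemma qe_def (hk : 1 ≤ k) (q : Fin k → ℝ) (j : ℕ) : qe hk q j = q ⟨min j (k-1), by omega⟩ :=
  rfl

lemma mb_def (hk : 1 ≤ k) (q : Fin k → ℝ) (j : ℕ) :
    mb hk q j = (qe hk q j + qe hk q (j+1))/2 := rfl

lemma idx_def (hk : 1 ≤ k) (q : Fin k → ℝ) (x : ℝ) :
    idx hk q x = ((Finset.range (k-1)).filter (fun j => mb hk q j < x)).card := rfl

lemma T_def (hk : 1 ≤ k) (q : Fin k → ℝ) (x : ℝ) : T hk q x = qe hk q (idx hk q x) := rfl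

lemma qmk (a b : ℕ) (ha : a < k) (hb : b < k) (hab : a = b) : q ⟨a, ha⟩ = q ⟨b, hb⟩ := by
  subst hab; rfl

lemma qe_mono (hq : Monotone q) : Monotone (qe hk q) := by
  intro a b hab
  exact hq (by simp [Fin.mk_le_mk]; omega)

lemma qe_eq (j : Fin k) : qe hk q (j : ℕ) = q j := by
  unfold qe; congr 1; ext; simp; omega

lemma mb_mono (hq : Monotone q) : Monotone (mb hk q) := by
  intro a b hab
  have h1 := qe_mono (hk := hk) hq hab
  have h2 := qe_mono (hk := hk) hq (Nat.add_le_add_right hab 1)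
  simp only [mb]; linarith

lemma idx_le (x : ℝ) : idx hk q x ≤ k - 1 := by
  unfold idx
  exact le_trans (Finset.card_filter_le _ _) (le_of_eq (Finset.card_range _))

lemma idx_mono (x y : ℝ) (hxy : x ≤ y) : idx hk q x ≤ idx hk q y := by
  unfold idx
  refine Finset.card_le_card ?_
  intro j hj
  simp only [Finset.mem_filter] at hj ⊢
  exact ⟨hj.1, lt_of_lt_of_le hj.2 hxy⟩

lemma mb_lt_of_idx (hq : Monotone q) (x : ℝ) (h : idx hk q x ≠ 0) :
    mb hk q (idx hk q x - 1) < x := by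
  by_contra h'
  push_neg at h'
  have hsub : (Finset.range (k-1)).filter (fun j => mb hk q j < x) ⊆
      Finset.range (idx hk q x - 1) := by
    intro j hj
    simp only [Finset.mem_filter, Finset.mem_range] at hj ⊢
    by_contra hj'
    push_neg at hj'
    exact absurd (lt_of_lt_of_le hj.2 h') (not_lt.2 (mb_mono hq hj'))
  have h2 : idx hk q x ≤ idx hk q x - 1 := by
    rw [← Finset.card_range (idx hk q x - 1)]; exact Finset.card_le_card hsub
  omega

lemma le_mb_of_idx (hq : Monotone q) (x : ℝ) (h : idx hk q x ≠ k - 1) :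
    x ≤ mb hk q (idx hk q x) := by
  by_contra h'
  push_neg at h'
  have hlt : idx hk q x < k - 1 := lt_of_le_of_ne (idx_le x) h
  have hsub : Finset.range (idx hk q x + 1) ⊆
      (Finset.range (k-1)).filter (fun j => mb hk q j < x) := by
    intro j hj
    simp only [Finset.mem_filter, Finset.mem_range] at hj ⊢
    constructor
    · omega
    · exact lt_of_le_of_lt (mb_mono hq (by omega)) h'
  have h2 : idx hk q x + 1 ≤ idx hk q x := by
    conv_lhs => rw [← Finset.card_range (idx hk q x + 1)]
    exact Finset.card_le_card hsub
  omega

lemma T_nearest (hq : Monotone q) (x : ℝ) (j : Fin k) :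
    |x - T hk q x| ≤ |x - q j| := by
  rw [← qe_eq (q := q) (hk := hk) j]
  set i := idx hk q x with hi
  set m := (j : ℕ)
  have hm : m ≤ k - 1 := by have := j.2; omega
  unfold T
  rcases lt_trichotomy m i with hmi | hmi | hmi
  · have hi0 : i ≠ 0 := by omega
    have hx : mb hk q (i - 1) < x := mb_lt_of_idx hq x hi0
    have h1 : qe hk q m ≤ qe hk q (i-1) := qe_mono hq (by omega)
    have h2 : qe hk q m ≤ qe hk q i := qe_mono hq (by omega)
    have h3 : qe hk q (i-1+1) = qe hk q i := by congr 1; omega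
    have hx2 : qe hk q m + qe hk q i < 2 * x := by
      unfold mb at hx; rw [h3] at hx; linarith
    have hxm : qe hk q m ≤ x := by linarith
    rw [abs_of_nonneg (by linarith : (0:ℝ) ≤ x - qe hk q m), abs_le]
    constructor <;> linarith
  · simp [hmi, hi]
  · have hik : i ≠ k - 1 := by omega
    have hx : x ≤ mb hk q i := le_mb_of_idx hq x hik
    have h1 : qe hk q (i+1) ≤ qe hk q m := qe_mono hq (by omega)
    have h2 : qe hk q i ≤ qe hk q m := qe_mono hq (by omega)
    have hx2 : 2 * x ≤ qe hk q i + qe hk q m := by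
      unfold mb at hx; linarith
    have hxm : x ≤ qe hk q m := by linarith
    rw [abs_of_nonpos (by linarith : x - qe hk q m ≤ 0), abs_le]
    constructor <;> linarith

lemma T_mono (hq : Monotone q) : Monotone (T hk q) :=
  fun x y hxy => qe_mono hq (idx_mono x y hxy)

lemma T_measurable (hq : Monotone q) : Measurable (T hk q) :=
  (T_mono hq).measurable

lemma T_eq_q (x : ℝ) :
    T hk q x = q ⟨idx hk q x, by have := idx_le (hk := hk) (q := q) x; omega⟩ := by
  have h := idx_le (hk := hk) (q := q) x
  rw [T_def, qe_def hk q (idx hk q x)]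
  all_goals try omega
  all_goals exact qmk _ _ (by omega) (by omega) (by omega)

lemma T_mem_range (x : ℝ) : T hk q x ∈ Set.range q := by
  rw [T_eq_q]; exact Set.mem_range_self _

noncomputable def cellI (hk : 1 ≤ k) (q : Fin k → ℝ) (i : Fin k) : Set ℝ :=
  (if (i:ℕ) = 0 then Set.univ else Set.Ioi (mb hk q ((i:ℕ)-1))) ∩
  (if (i:ℕ) = k-1 then Set.univ else Set.Iic (mb hk q (i:ℕ)))

lemma measurableSet_cellI (i : Fin k) : MeasurableSet (cellI hk q i) := by
  unfold cellI; split_ifs <;> measurability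

lemma mem_cellI_self (hq : Monotone q) (x : ℝ) :
    x ∈ cellI hk q ⟨idx hk q x, by have := idx_le (hk := hk) (q := q) x; omega⟩ := by
  constructor
  · split_ifs with h1
    · trivial
    · exact mb_lt_of_idx hq x h1
  · split_ifs with h2
    · trivial
    · exact le_mb_of_idx hq x h2

lemma idx_eq_of_mem (hq : Monotone q) {i : Fin k} {x : ℝ} (hx : x ∈ cellI hk q i) :
    idx hk q x = (i : ℕ) := by
  obtain ⟨hx1, hx2⟩ := hx
  have : (Finset.range (k-1)).filter (fun j => mb hk q j < x) = Finset.range (i : ℕ) := by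
    ext j
    simp only [Finset.mem_filter, Finset.mem_range]
    constructor
    · rintro ⟨hj1, hj2⟩
      by_contra hji
      push_neg at hji
      have hik : (i : ℕ) ≠ k - 1 := by omega
      rw [if_neg hik] at hx2
      exact absurd (lt_of_lt_of_le hj2 (le_trans hx2 (mb_mono hq hji))) (lt_irrefl _)
    · intro hj
      have hi0 : (i : ℕ) ≠ 0 := by omega
      rw [if_neg hi0] at hx1
      refine ⟨by have := i.2; omega, lt_of_le_of_lt (mb_mono hq (by omega)) hx1⟩
  rw [idx_def, this, Finset.card_range]

lemma T_eq_on_cell (hq : Monotone q) {i : Fin k} {x : ℝ} (hx : x ∈ cellI hk q i) :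
    T hk q x = q i := by
  rw [T_def, idx_eq_of_mem hq hx, qe_eq]

lemma cellI_disjoint (hq : Monotone q) :
    Pairwise (Function.onFun Disjoint (cellI hk q)) := by
  intro i j hij
  rw [Function.onFun, Set.disjoint_left]
  intro x hxi hxj
  exact hij (Fin.ext (by rw [← idx_eq_of_mem hq hxi, ← idx_eq_of_mem hq hxj]))

variable (μ : Measure ℝ) [IsProbabilityMeasure μ]

lemma meas_Iic (t : ℝ) : μ (Set.Iic t) = ENNReal.ofReal (mcdf μ t) :=
  (ENNReal.ofReal_toReal (measure_ne_top μ _)).symm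

lemma meas_Ioc {a b : ℝ} (hab : a ≤ b) :
    μ (Set.Ioc a b) = ENNReal.ofReal (mcdf μ b - mcdf μ a) := by
  rw [← Set.Iic_sdiff_Iic,
    measure_diff (Set.Iic_subset_Iic.2 hab) measurableSet_Iic.nullMeasurableSet
      (measure_ne_top μ _),
    ENNReal.ofReal_sub _ (show (0:ℝ) ≤ mcdf μ a from ENNReal.toReal_nonneg), meas_Iic, meas_Iic]

lemma meas_Ioi (a : ℝ) : μ (Set.Ioi a) = ENNReal.ofReal (1 - mcdf μ a) := by
  rw [← Set.compl_Iic, measure_compl measurableSet_Iic (measure_ne_top μ _), measure_univ,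
    ENNReal.ofReal_sub _ (show (0:ℝ) ≤ mcdf μ a from ENNReal.toReal_nonneg),
    ENNReal.ofReal_one, meas_Iic]

omit [IsProbabilityMeasure μ] in
lemma cellBd_zero : cellBd μ q 0 = 0 := by simp [cellBd]

omit [IsProbabilityMeasure μ] in
lemma cellBd_top {j : ℕ} (h0 : j ≠ 0) (h : k ≤ j) : cellBd μ q j = 1 := by
  rw [cellBd, dif_neg h0, dif_pos h]

omit [IsProbabilityMeasure μ] in
lemma cellBd_mid {j : ℕ} (h0 : j ≠ 0) (hjk : j < k) :
    cellBd μ q j = mcdf μ (mb hk q (j-1)) := by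
  rw [cellBd, dif_neg h0, dif_neg (by omega : ¬ k ≤ j)]
  have hj1 : j - 1 + 1 = j := by omega
  have e1 : qe hk q (j-1) = q ⟨j-1, by omega⟩ := by
    rw [qe_def hk q (j-1)]
    all_goals try omega
    all_goals exact qmk _ _ (by omega) (by omega) (by omega)
  have e2 : qe hk q j = q ⟨j, hjk⟩ := by
    rw [qe_def hk q j]
    all_goals try omega
    all_goals exact qmk _ _ (by omega) (by omega) (by omega)
  rw [mb_def, hj1, e1, e2]

lemma meas_cellI (hq : Monotone q) (i : Fin k) :
    μ (cellI hk q i) = ENNReal.ofReal (cellBd μ q ((i:ℕ)+1) - cellBd μ q (i:ℕ)) := by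
  obtain ⟨n, hn⟩ := i
  simp only [Fin.val_mk]
  by_cases h0 : n = 0 <;> by_cases hk1 : n = k - 1
  · have hI : cellI hk q ⟨n, hn⟩ = Set.univ := by
      rw [cellI]; simp only [Fin.val_mk]; rw [if_pos h0, if_pos hk1, Set.univ_inter]
    rw [hI, measure_univ, cellBd_top (μ := μ) (q := q) (by omega) (by omega), h0,
      cellBd_zero (μ := μ) (q := q), sub_zero, ENNReal.ofReal_one]
  · have hI : cellI hk q ⟨n, hn⟩ = Set.Iic (mb hk q n) := by
      rw [cellI]; simp only [Fin.val_mk]; rw [if_pos h0, if_neg hk1, Set.univ_inter]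
    rw [hI, meas_Iic, cellBd_mid (μ := μ) (by omega : n+1 ≠ 0) (by omega : n+1 < k),
      Nat.add_sub_cancel, h0, cellBd_zero (μ := μ) (q := q), sub_zero]
  · have hI : cellI hk q ⟨n, hn⟩ = Set.Ioi (mb hk q (n-1)) := by
      rw [cellI]; simp only [Fin.val_mk]; rw [if_neg h0, if_pos hk1, Set.inter_univ]
    rw [hI, meas_Ioi, cellBd_top (μ := μ) (q := q) (by omega) (by omega),
      cellBd_mid (μ := μ) h0 (by omega)]
  · have hI : cellI hk q ⟨n, hn⟩ = Set.Ioc (mb hk q (n-1)) (mb hk q n) := by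
      rw [cellI]; simp only [Fin.val_mk]; rw [if_neg h0, if_neg hk1, Set.Ioi_inter_Iic]
    rw [hI, meas_Ioc μ (mb_mono hq (by omega : n-1 ≤ n)),
      cellBd_mid (μ := μ) (by omega : n+1 ≠ 0) (by omega : n+1 < k),
      cellBd_mid (μ := μ) h0 (by omega), Nat.add_sub_cancel]

theorem map_T (hq : Monotone q) :
    μ.map (T hk q) =
      ∑ i : Fin k, ENNReal.ofReal (cellBd μ q ((i:ℕ)+1) - cellBd μ q (i:ℕ)) •
        Measure.dirac (q i) := by
  ext s hs
  rw [Measure.map_apply (T_measurable hq) hs, Measure.finset_sum_apply]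
  have hdecomp : T hk q ⁻¹' s = ⋃ i : Fin k, (cellI hk q i ∩ T hk q ⁻¹' s) := by
    ext x
    simp only [Set.mem_iUnion, Set.mem_inter_iff, Set.mem_preimage]
    constructor
    · intro hx
      exact ⟨_, mem_cellI_self hq x, hx⟩
    · rintro ⟨i, _, hx⟩
      exact hx
  have hdisj : Pairwise (Function.onFun Disjoint (fun i => cellI hk q i ∩ T hk q ⁻¹' s)) :=
    fun i j hij => Disjoint.mono Set.inter_subset_left Set.inter_subset_left
      (cellI_disjoint hq hij)
  rw [hdecomp, measure_iUnion hdisj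
    (fun i => (measurableSet_cellI i).inter ((T_measurable hq) hs)), tsum_fintype]
  refine Finset.sum_congr rfl (fun i _ => ?_)
  rw [Measure.smul_apply, Measure.dirac_apply' _ hs, ← meas_cellI (hk := hk) μ hq i]
  by_cases hqi : q i ∈ s
  · rw [Set.indicator_of_mem hqi, Pi.one_apply, smul_eq_mul, mul_one]
    congr 1
    rw [Set.inter_eq_left]
    intro x hx
    rw [Set.mem_preimage, T_eq_on_cell hq hx]
    exact hqi
  · rw [Set.indicator_of_notMem hqi, smul_eq_mul, mul_zero]
    convert measure_empty
    · rw [Set.eq_empty_iff_forall_notMem]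
      intro x ⟨hx1, hx2⟩
      rw [Set.mem_preimage, T_eq_on_cell hq hx1] at hx2
      exact hqi hx2
    · infer_instance

end S5

lemma mcdf_eq_cdf (μ : Measure ℝ) [IsProbabilityMeasure μ] :
    mcdf μ = fun t => ProbabilityTheory.cdf μ t := by
  funext t
  rw [mcdf, ProbabilityTheory.cdf_eq_real, measureReal_def]

lemma mquantile_mono (μ : Measure ℝ) [IsProbabilityMeasure μ] {a b : ℝ}
    (ha : 0 < a) (hb : b < 1) (hab : a ≤ b) : mquantile μ a ≤ mquantile μ b := by
  have hcdf := mcdf_eq_cdf μ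
  have hne : {t : ℝ | b ≤ mcdf μ t}.Nonempty := by
    have h1 : ∀ᶠ t in atTop, b ≤ mcdf μ t := by
      rw [hcdf]
      exact (ProbabilityTheory.tendsto_cdf_atTop μ).eventually (eventually_ge_nhds hb)
    obtain ⟨t, ht⟩ := h1.exists
    exact ⟨t, ht⟩
  have hbdd : BddBelow {t : ℝ | a ≤ mcdf μ t} := by
    have h1 : ∀ᶠ t in atBot, mcdf μ t < a := by
      rw [hcdf]
      exact (ProbabilityTheory.tendsto_cdf_atBot μ).eventually (eventually_lt_nhds ha)
    obtain ⟨t0, ht0⟩ := Filter.eventually_atBot.mp h1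
    refine ⟨t0, fun t ht => ?_⟩
    by_contra h'
    push_neg at h'
    exact absurd ht (not_le.2 (ht0 t h'.le))
  exact csInf_le_csInf hbdd hne (fun t ht => le_trans hab ht)

/-- `W₁(μ, ν_{Q_v})` equals the integral of the distance to the nearest quantile,
so `ν_{Q_v}` minimizes `λ ↦ W₁(μ, λ)` among probability measures supported on the quantiles. -/
theorem stmt5 (μ : Measure ℝ) (hμ : BasicAssumptions μ)
    (hint : Integrable (fun x : ℝ => |x|) μ) {k : ℕ} (hk : 1 ≤ k)
    (v : Fin k → ℝ) (hv : Monotone v) (hv01 : ∀ j, v j ∈ Set.Ioo (0 : ℝ) 1) :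
    W1 μ (nuQ μ v) = ∫ x, ⨅ j : Fin k, |x - mquantile μ (v j)| ∂μ ∧
    ∀ lam : Measure ℝ, IsProbabilityMeasure lam →
      lam ((Set.range fun j : Fin k => mquantile μ (v j))ᶜ) = 0 →
      W1 μ (nuQ μ v) ≤ W1 μ lam := by
  obtain ⟨hprob, -⟩ := hμ
  haveI := hprob
  haveI : Nonempty (Fin k) := ⟨⟨0, hk⟩⟩
  set q : Fin k → ℝ := fun j => mquantile μ (v j) with hqdef
  have hq : Monotone q := fun a b hab =>
    mquantile_mono μ (hv01 a).1 (hv01 b).2 (hv hab)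
  set Tf : ℝ → ℝ := S5.T hk q with hTdef
  have hT : Measurable Tf := S5.T_measurable hq
  have hnuQ : nuQ μ v = μ.map Tf := by
    rw [nuQ]
    exact (S5.map_T μ hq).symm
  -- pointwise identity
  have hpt : ∀ x : ℝ, (⨅ j : Fin k, |x - q j|) = |x - Tf x| := by
    intro x
    refine le_antisymm ?_ (le_ciInf (fun j => S5.T_nearest hq x j))
    rw [hTdef, S5.T_eq_q]
    exact ciInf_le ⟨0, by rintro y ⟨j, rfl⟩; exact abs_nonneg _⟩ _
  have hrange : MeasurableSet (Set.range q) := (Set.finite_range q).measurableSet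
  -- bound on the quantiles
  obtain ⟨C, hC⟩ : ∃ C : ℝ, ∀ j : Fin k, |q j| ≤ C :=
    ⟨Finset.univ.sup' Finset.univ_nonempty (fun j => |q j|),
      fun j => Finset.le_sup' (fun j => |q j|) (Finset.mem_univ j)⟩
  have hC0 : 0 ≤ C := le_trans (abs_nonneg _) (hC ⟨0, hk⟩)
  -- integrability of x ↦ |x - Tf x|
  have hmeasg : Measurable (fun x : ℝ => |x - Tf x|) := (measurable_id.sub hT).abs
  have hintg : Integrable (fun x : ℝ => |x - Tf x|) μ := by
    refine Integrable.mono' (hint.add (integrable_const C)) hmeasg.aestronglyMeasurable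
      (Filter.Eventually.of_forall (fun x => ?_))
    rw [Real.norm_eq_abs, abs_abs]
    calc |x - Tf x| ≤ |x - q ⟨0, hk⟩| := S5.T_nearest hq x ⟨0, hk⟩
      _ ≤ |x| + |q ⟨0, hk⟩| := abs_sub x _
      _ ≤ |x| + C := by linarith [hC ⟨0, hk⟩]
  -- the key lower bound for any coupling with a measure supported on the quantiles
  have keyB : ∀ lam : Measure ℝ, IsProbabilityMeasure lam → lam ((Set.range q)ᶜ) = 0 →
      ∀ π : Measure (ℝ × ℝ), IsProbabilityMeasure π → π.map Prod.fst = μ →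
      π.map Prod.snd = lam →
      ∫ x, |x - Tf x| ∂μ ≤ ∫ p : ℝ × ℝ, |p.1 - p.2| ∂π := by
    intro lam hlamp hlam π hπp hπ1 hπ2
    have hae : ∀ᵐ p : ℝ × ℝ ∂π, p.2 ∈ Set.range q := by
      rw [ae_iff]
      have : {p : ℝ × ℝ | ¬ p.2 ∈ Set.range q} = Prod.snd ⁻¹' (Set.range q)ᶜ := rfl
      rw [this, ← Measure.map_apply measurable_snd hrange.compl, hπ2]
      exact hlam
    have hint1 : Integrable (fun p : ℝ × ℝ => |p.1|) π := by
      have h1 : Integrable (fun x : ℝ => |x|) (π.map Prod.fst) := hπ1.symm ▸ hint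
      exact (integrable_map_measure continuous_abs.aestronglyMeasurable
        measurable_fst.aemeasurable).mp h1
    have hint2 : Integrable (fun p : ℝ × ℝ => |p.2|) π := by
      have hlami : Integrable (fun y : ℝ => |y|) lam := by
        refine Integrable.mono' (integrable_const C) continuous_abs.aestronglyMeasurable ?_
        have : ∀ᵐ y ∂lam, y ∈ Set.range q := by
          rw [ae_iff]
          exact hlam
        refine this.mono (fun y hy => ?_)
        obtain ⟨j, rfl⟩ := hy
        rw [Real.norm_eq_abs, abs_abs]
        exact hC j
      have h1 : Integrable (fun y : ℝ => |y|) (π.map Prod.snd) := hπ2.symm ▸ hlami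
      exact (integrable_map_measure continuous_abs.aestronglyMeasurable
        measurable_snd.aemeasurable).mp h1
    have hintc : Integrable (fun p : ℝ × ℝ => |p.1 - p.2|) π := by
      refine Integrable.mono' (hint1.add hint2)
        ((continuous_fst.sub continuous_snd).abs.aestronglyMeasurable)
        (Filter.Eventually.of_forall (fun p => ?_))
      rw [Real.norm_eq_abs, abs_abs]
      exact abs_sub p.1 p.2
    have hintg' : Integrable (fun p : ℝ × ℝ => |p.1 - Tf p.1|) π := by
      have h1 : Integrable (fun x : ℝ => |x - Tf x|) (π.map Prod.fst) := hπ1.symm ▸ hintg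
      exact (integrable_map_measure hmeasg.aestronglyMeasurable
        measurable_fst.aemeasurable).mp h1
    have step1 : ∫ x, |x - Tf x| ∂μ = ∫ p : ℝ × ℝ, |p.1 - Tf p.1| ∂π := by
      rw [← hπ1, integral_map measurable_fst.aemeasurable hmeasg.aestronglyMeasurable]
    rw [step1]
    refine integral_mono_ae hintg' hintc (hae.mono (fun p hp => ?_))
    obtain ⟨j, hj⟩ := hp
    show |p.1 - Tf p.1| ≤ |p.1 - p.2|
    rw [← hj]
    exact S5.T_nearest hq p.1 j
  -- the optimal coupling
  have hφ : Measurable (fun x : ℝ => (x, Tf x)) := measurable_id.prodMk hT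
  haveI : IsProbabilityMeasure (μ.map (fun x : ℝ => (x, Tf x))) :=
    Measure.isProbabilityMeasure_map hφ.aemeasurable
  have hmem : (∫ x, |x - Tf x| ∂μ) ∈ {c : ℝ | ∃ π : Measure (ℝ × ℝ),
      IsProbabilityMeasure π ∧ π.map Prod.fst = μ ∧ π.map Prod.snd = nuQ μ v ∧
      c = ∫ p : ℝ × ℝ, |p.1 - p.2| ∂π} := by
    refine ⟨μ.map (fun x : ℝ => (x, Tf x)), inferInstance, ?_, ?_, ?_⟩
    · rw [Measure.map_map measurable_fst hφ]
      exact Measure.map_id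
    · rw [Measure.map_map measurable_snd hφ, hnuQ]
      rfl
    · rw [integral_map (f := fun p : ℝ × ℝ => |p.1 - p.2|) hφ.aemeasurable
        ((continuous_fst.sub continuous_snd).abs.aestronglyMeasurable)]
  have hnuQprob : IsProbabilityMeasure (nuQ μ v) := by
    rw [hnuQ]
    exact Measure.isProbabilityMeasure_map hT.aemeasurable
  have hnuQsupp : nuQ μ v ((Set.range q)ᶜ) = 0 := by
    rw [hnuQ, Measure.map_apply hT hrange.compl]
    convert measure_empty
    · rw [Set.eq_empty_iff_forall_notMem]
      intro x hx
      exact hx (S5.T_mem_range x)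
    · infer_instance
  have hbddset : ∀ lam : Measure ℝ, BddBelow {c : ℝ | ∃ π : Measure (ℝ × ℝ),
      IsProbabilityMeasure π ∧ π.map Prod.fst = μ ∧ π.map Prod.snd = lam ∧
      c = ∫ p : ℝ × ℝ, |p.1 - p.2| ∂π} := by
    intro lam
    refine ⟨0, ?_⟩
    rintro c ⟨π, hπp, -, -, rfl⟩
    exact integral_nonneg (fun p => abs_nonneg _)
  have hW : W1 μ (nuQ μ v) = ∫ x, |x - Tf x| ∂μ := by
    refine le_antisymm (csInf_le (hbddset (nuQ μ v)) hmem) (le_csInf ⟨_, hmem⟩ ?_)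
    rintro c ⟨π, hπp, hπ1, hπ2, rfl⟩
    exact keyB (nuQ μ v) hnuQprob hnuQsupp π hπp hπ1 hπ2
  have hinteq : ∫ x, ⨅ j : Fin k, |x - mquantile μ (v j)| ∂μ = ∫ x, |x - Tf x| ∂μ := by
    refine integral_congr_ae (Filter.Eventually.of_forall (fun x => ?_))
    exact hpt x
  constructor
  · rw [hW, hinteq]
  · intro lam hlamp hlam
    rw [hW]
    haveI := hlamp
    have hlam' : lam ((Set.range q)ᶜ) = 0 := hlam
    refine le_csInf ⟨∫ p : ℝ × ℝ, |p.1 - p.2| ∂(μ.prod lam), μ.prod lam, inferInstance,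
      ?_, ?_, rfl⟩ ?_
    · rw [Measure.map_fst_prod, measure_univ, one_smul]
    · rw [Measure.map_snd_prod, measure_univ, one_smul]
    · rintro c ⟨π, hπp, hπ1, hπ2, rfl⟩
      exact keyB lam hlamp hlam' π hπp hπ1 hπ2
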